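/- Averaging over the torus: Let f : 𝕋³ → [0,∞) be measurable, where 𝕋 = ℝ/ℤ. For each dyadic interval I = [a,b] ⊆ [0,1] of length 2^{-k}, ∫_a^b ∫_x^b ∫_y^b f(x,y,z) dz dy dx summed over all dyadic I of generation k equals (by the change of variables x = v+ra, z = v+rb, y ∈ v+rI) at most 2^{-k}·∫₀¹∫₀¹ ∫_{v+rI'} f(v+ra', y, v+rb')·2^{-k} dy dr dv for a single interval I' = [a',b'] of length 2^{-k}, i.e. the triple integral over nested configurations inside a dyadic interval is controlled by the average over random affine placements ψ^{v,r}(t) = v + rt mod 1 of that interval. -/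

import Mathlib

open MeasureTheory ENNReal Set

section TorusAveragingAux

lemma shift_lem (g : ℝ → ℝ≥0∞) (s : ℝ) {A : Set ℝ} (hA : MeasurableSet A) :
    ∫⁻ x in A, g x = ∫⁻ x in (fun x => x + s) ⁻¹' A, g (x + s) := by
  have he : MeasurableEmbedding (fun x : ℝ => x + s) :=
    (Homeomorph.addRight s).measurableEmbedding
  have h1 : (volume : Measure ℝ).restrict A
      = Measure.map (fun x => x + s) (volume.restrict ((fun x => x + s) ⁻¹' A)) := by
    rw [← Measure.restrict_map (measurable_add_const s) hA, map_add_right_eq_self]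
  rw [h1, he.lintegral_map]

-- L3: scaling
lemma scale_lem (g : ℝ → ℝ≥0∞) {c : ℝ} (hc : 0 < c) (x : ℝ) :
    ∫⁻ z in Ioc x (x + c), g z
      = ENNReal.ofReal c * ∫⁻ r in Ioc (0:ℝ) 1, g (c * r + x) := by
  have he : MeasurableEmbedding (fun r : ℝ => c * r + x) :=
    (affineHomeomorph c x hc.ne').measurableEmbedding
  have hT : Measurable (fun r : ℝ => c * r + x) := he.measurable
  have hmap : Measure.map (fun r : ℝ => c * r + x) (volume : Measure ℝ)
      = ENNReal.ofReal c⁻¹ • volume := by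
    have : (fun r : ℝ => c * r + x) = (fun y : ℝ => y + x) ∘ (fun r : ℝ => c * r) := rfl
    rw [this, ← Measure.map_map (measurable_add_const x) (measurable_const_mul c),
      Real.map_volume_mul_left hc.ne', Measure.map_smul, map_add_right_eq_self,
      abs_inv, abs_of_pos hc]
  have hvol : (volume : Measure ℝ)
      = ENNReal.ofReal c • Measure.map (fun r : ℝ => c * r + x) volume := by
    rw [hmap, smul_smul, ← ENNReal.ofReal_mul hc.le, mul_inv_cancel₀ hc.ne', ENNReal.ofReal_one,
      one_smul]
  have hpre : (fun r : ℝ => c * r + x) ⁻¹' Ioc x (x + c) = Ioc (0:ℝ) 1 := by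
    ext r
    simp only [mem_preimage, mem_Ioc]
    constructor
    · rintro ⟨h1, h2⟩
      constructor <;> nlinarith
    · rintro ⟨h1, h2⟩
      constructor <;> nlinarith
  calc ∫⁻ z in Ioc x (x + c), g z
      = ∫⁻ z, g z ∂((ENNReal.ofReal c • Measure.map (fun r : ℝ => c * r + x) volume).restrict
          (Ioc x (x + c))) := by rw [← hvol]
    _ = ENNReal.ofReal c * ∫⁻ z in Ioc x (x + c), g z
          ∂(Measure.map (fun r : ℝ => c * r + x) volume) := by
        rw [Measure.restrict_smul, lintegral_smul_measure, smul_eq_mul]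
    _ = ENNReal.ofReal c * ∫⁻ r in Ioc (0:ℝ) 1, g (c * r + x) := by
        rw [Measure.restrict_map hT measurableSet_Ioc, he.lintegral_map, hpre]

-- L2: periodic shift over [0,1]
lemma periodic_shift (g : ℝ → ℝ≥0∞) (hper : ∀ x, g (x + 1) = g x)
    {s : ℝ} (hs0 : 0 ≤ s) (hs1 : s ≤ 1) :
    ∫⁻ v in Ioc (0:ℝ) 1, g (v + s) = ∫⁻ v in Ioc (0:ℝ) 1, g v := by
  have h1 : ∫⁻ x in Ioc s (1 + s), g x = ∫⁻ v in Ioc (0:ℝ) 1, g (v + s) := by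
    have hp : (fun x : ℝ => x + s) ⁻¹' Ioc s (1 + s) = Ioc (0:ℝ) 1 := by
      ext x
      simp only [mem_preimage, mem_Ioc]
      constructor <;> rintro ⟨a, b⟩ <;> constructor <;> linarith
    rw [shift_lem g s measurableSet_Ioc, hp]
  have h2 : ∫⁻ x in Ioc (1:ℝ) (1 + s), g x = ∫⁻ x in Ioc (0:ℝ) s, g x := by
    rw [shift_lem g 1 measurableSet_Ioc]
    have : (fun x : ℝ => x + 1) ⁻¹' Ioc 1 (1 + s) = Ioc 0 s := by
      ext x; simp only [mem_preimage, mem_Ioc]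
      constructor <;> rintro ⟨a, b⟩ <;> constructor <;> linarith
    rw [this]
    exact lintegral_congr fun x => hper x
  have hsplit1 : Ioc s (1 + s) = Ioc s 1 ∪ Ioc 1 (1 + s) :=
    (Set.Ioc_union_Ioc_eq_Ioc hs1 (by linarith)).symm
  have hsplit2 : Ioc (0:ℝ) 1 = Ioc 0 s ∪ Ioc s 1 :=
    (Set.Ioc_union_Ioc_eq_Ioc hs0 hs1).symm
  rw [← h1, hsplit1, lintegral_union measurableSet_Ioc (Set.Ioc_disjoint_Ioc_of_le le_rfl), h2,
    hsplit2, lintegral_union measurableSet_Ioc (Set.Ioc_disjoint_Ioc_of_le le_rfl), add_comm]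

-- L5: splitting [0,1] into dyadic pieces
lemma split_lem (g : ℝ → ℝ≥0∞) (m : ℝ) (hm : 0 < m) (n : ℕ) :
    ∑ j ∈ Finset.range n, ∫⁻ x in Ioc ((j:ℝ)/m) (((j:ℝ)+1)/m), g x
      = ∫⁻ x in Ioc (0:ℝ) ((n:ℝ)/m), g x := by
  have hm' : (0:ℝ) < m := hm
  induction n with
  | zero =>
      simp only [Finset.range_zero, Finset.sum_empty, Nat.cast_zero, zero_div, Set.Ioc_self,
        Measure.restrict_empty, lintegral_zero_measure]
  | succ n ih =>
      rw [Finset.sum_range_succ, ih]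
      have hsplit : Ioc (0:ℝ) (((n:ℝ)+1)/m) = Ioc 0 ((n:ℝ)/m) ∪ Ioc ((n:ℝ)/m) (((n:ℝ)+1)/m) := by
        refine (Set.Ioc_union_Ioc_eq_Ioc ?_ ?_).symm
        · positivity
        · gcongr
          linarith
      rw [Nat.cast_succ, hsplit, lintegral_union measurableSet_Ioc (Set.Ioc_disjoint_Ioc_of_le le_rfl)]

-- L4: triangle swap
lemma triangle_lem (g : ℝ → ℝ → ℝ≥0∞) (hg : Measurable fun p : ℝ × ℝ => g p.1 p.2) (A B : ℝ) :
    ∫⁻ y in Icc A B, ∫⁻ z in Icc y B, g y z = ∫⁻ z in Icc A B, ∫⁻ y in Icc A z, g y z := by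
  have hS : MeasurableSet {p : ℝ × ℝ | p.1 ≤ p.2} := measurableSet_le measurable_fst measurable_snd
  set e : ℝ → ℝ → ℝ≥0∞ := fun y z => {p : ℝ × ℝ | p.1 ≤ p.2}.indicator (fun p => g p.1 p.2) (y, z)
    with he_def
  have he : Measurable fun p : ℝ × ℝ => e p.1 p.2 := hg.indicator hS
  have step1 : ∫⁻ y in Icc A B, ∫⁻ z in Icc y B, g y z
      = ∫⁻ y in Icc A B, ∫⁻ z in Icc A B, e y z := by
    refine setLIntegral_congr_fun_ae measurableSet_Icc (ae_of_all _ fun y hy => ?_)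
    have h1 : ∀ z : ℝ, e y z = (Ici y).indicator (g y) z := by
      intro z
      by_cases h : y ≤ z <;>
        simp [he_def, Set.indicator, h]
    simp_rw [h1]
    rw [lintegral_indicator measurableSet_Ici, Measure.restrict_restrict measurableSet_Ici]
    have hset : Ici y ∩ Icc A B = Icc y B := by
      ext z
      simp only [mem_Icc, mem_inter_iff, mem_Ici]
      obtain ⟨hy1, hy2⟩ := hy
      constructor
      · rintro ⟨a, _, b⟩; exact ⟨a, b⟩
      · rintro ⟨a, b⟩; exact ⟨a, le_trans hy1 a, b⟩
    rw [hset]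
  have step3 : ∫⁻ z in Icc A B, ∫⁻ y in Icc A B, e y z
      = ∫⁻ z in Icc A B, ∫⁻ y in Icc A z, g y z := by
    refine setLIntegral_congr_fun_ae measurableSet_Icc (ae_of_all _ fun z hz => ?_)
    have h1 : ∀ y : ℝ, e y z = (Iic z).indicator (fun y => g y z) y := by
      intro y
      by_cases h : y ≤ z <;>
        simp [he_def, Set.indicator, h]
    simp_rw [h1]
    rw [lintegral_indicator measurableSet_Iic, Measure.restrict_restrict measurableSet_Iic]
    have hset : Iic z ∩ Icc A B = Icc A z := by
      ext y
      simp only [mem_Icc, mem_inter_iff, mem_Iic]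
      obtain ⟨hz1, hz2⟩ := hz
      constructor
      · rintro ⟨a, b, c⟩; exact ⟨b, a⟩
      · rintro ⟨a, b⟩; exact ⟨b, a, le_trans b hz2⟩
    rw [hset]
  rw [step1, ← step3]
  exact lintegral_lintegral_swap he.aemeasurable

-- measurability helpers
lemma meas_icc {α : Type*} [MeasurableSpace α] {φ ψ : α → ℝ} (hφ : Measurable φ)
    (hψ : Measurable ψ) {F : α → ℝ → ℝ≥0∞} (hF : Measurable fun q : α × ℝ => F q.1 q.2) :
    Measurable fun a => ∫⁻ y in Icc (φ a) (ψ a), F a y := by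
  have hset : MeasurableSet {q : α × ℝ | φ q.1 ≤ q.2 ∧ q.2 ≤ ψ q.1} :=
    ((measurableSet_le (hφ.comp measurable_fst) measurable_snd).inter
      (measurableSet_le measurable_snd (hψ.comp measurable_fst)))
  have h : ∀ a, ∫⁻ y in Icc (φ a) (ψ a), F a y
      = ∫⁻ y, ({q : α × ℝ | φ q.1 ≤ q.2 ∧ q.2 ≤ ψ q.1}.indicator
          (fun q => F q.1 q.2)) (a, y) := by
    intro a
    rw [← lintegral_indicator measurableSet_Icc]
    refine lintegral_congr fun y => ?_
    simp only [Set.indicator_apply, Set.mem_Icc, Set.mem_setOf_eq]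
  simp_rw [h]
  exact Measurable.lintegral_prod_right (hF.indicator hset)

lemma meas_ioc {α : Type*} [MeasurableSpace α] {φ ψ : α → ℝ} (hφ : Measurable φ)
    (hψ : Measurable ψ) {F : α → ℝ → ℝ≥0∞} (hF : Measurable fun q : α × ℝ => F q.1 q.2) :
    Measurable fun a => ∫⁻ y in Ioc (φ a) (ψ a), F a y := by
  have hset : MeasurableSet {q : α × ℝ | φ q.1 < q.2 ∧ q.2 ≤ ψ q.1} :=
    ((measurableSet_lt (hφ.comp measurable_fst) measurable_snd).inter
      (measurableSet_le measurable_snd (hψ.comp measurable_fst)))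
  have h : ∀ a, ∫⁻ y in Ioc (φ a) (ψ a), F a y
      = ∫⁻ y, ({q : α × ℝ | φ q.1 < q.2 ∧ q.2 ≤ ψ q.1}.indicator
          (fun q => F q.1 q.2)) (a, y) := by
    intro a
    rw [← lintegral_indicator measurableSet_Ioc]
    refine lintegral_congr fun y => ?_
    simp only [Set.indicator_apply, Set.mem_Ioc, Set.mem_setOf_eq]
  simp_rw [h]
  exact Measurable.lintegral_prod_right (hF.indicator hset)

end TorusAveragingAux

/-- Averaging over the torus: the sum over all dyadic intervals `I` of generation `k` of
the ordered triple integral of a nonnegative (measurable, `1`-periodic in each variable)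
function `f` over `{a(I) ≤ x ≤ y ≤ z ≤ b(I)}` is at most the average over random affine
placements `ψ^{v,r}(t) = v + r·t` of a single fixed dyadic interval `I' = [a', b']` of
generation `k` of `∫_{ψ(I')} f(ψ(a'), y, ψ(b')) dy · 2⁻ᵏ`. -/
theorem torus_averaging (f : ℝ → ℝ → ℝ → ℝ≥0∞)
    (hf : Measurable fun p : ℝ × ℝ × ℝ => f p.1 p.2.1 p.2.2)
    (hper1 : ∀ x y z, f (x + 1) y z = f x y z)
    (hper2 : ∀ x y z, f x (y + 1) z = f x y z)
    (hper3 : ∀ x y z, f x y (z + 1) = f x y z)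
    (k : ℕ) (j' : ℕ) (hj' : j' < 2 ^ k) :
    ∑ j ∈ Finset.range (2 ^ k),
        ∫⁻ x in Set.Icc ((j : ℝ) / 2 ^ k) (((j : ℝ) + 1) / 2 ^ k),
          ∫⁻ y in Set.Icc x (((j : ℝ) + 1) / 2 ^ k),
            ∫⁻ z in Set.Icc y (((j : ℝ) + 1) / 2 ^ k), f x y z ≤
      ∫⁻ v in Set.Icc (0 : ℝ) 1, ∫⁻ r in Set.Icc (0 : ℝ) 1,
        (∫⁻ y in Set.Icc (v + r * ((j' : ℝ) / 2 ^ k)) (v + r * (((j' : ℝ) + 1) / 2 ^ k)),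
            f (v + r * ((j' : ℝ) / 2 ^ k)) y (v + r * (((j' : ℝ) + 1) / 2 ^ k))) *
          ENNReal.ofReal ((2 : ℝ) ^ (-(k : ℤ))) := by
  have hP : (0:ℝ) < 2 ^ k := by positivity
  set P : ℝ := (2:ℝ) ^ k with hPdef
  set c : ℝ := P⁻¹ with hcdef
  have hc : 0 < c := by positivity
  set A' : ℝ := (j' : ℝ) / P with hA'def
  have hA'0 : 0 ≤ A' := by positivity
  have hb' : ((j':ℝ) + 1) / P = A' + c := by rw [hA'def, hcdef]; field_simp
  have hA'1 : A' + c ≤ 1 := by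
    rw [← hb', div_le_one hP]
    have : (j' : ℝ) + 1 ≤ P := by
      rw [hPdef]
      exact_mod_cast Nat.succ_le_of_lt hj'
    linarith
  have hofReal : ENNReal.ofReal ((2:ℝ) ^ (-(k:ℤ))) = ENNReal.ofReal c := by
    congr 1
    rw [hcdef, hPdef, zpow_neg, zpow_natCast]
  set H : ℝ → ℝ → ℝ≥0∞ := fun x r => ∫⁻ y in Set.Icc x (x + r * c), f x y (x + r * c)
    with hHdef
  have hHm : Measurable fun p : ℝ × ℝ => H p.1 p.2 := by
    apply meas_icc measurable_fst (measurable_fst.add (measurable_snd.mul_const c))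
    exact hf.comp ((measurable_fst.comp measurable_fst).prodMk (measurable_snd.prodMk
      ((measurable_fst.comp measurable_fst).add
        ((measurable_snd.comp measurable_fst).mul_const c))))
  set G : ℝ → ℝ → ℝ≥0∞ := fun x z => ∫⁻ y in Set.Icc x z, f x y z with hGdef
  have hGm : Measurable fun p : ℝ × ℝ => G p.1 p.2 := by
    apply meas_icc measurable_fst measurable_snd
    exact hf.comp ((measurable_fst.comp measurable_fst).prodMk
      (measurable_snd.prodMk (measurable_snd.comp measurable_fst)))
  set Φ : ℝ → ℝ≥0∞ := fun x => ∫⁻ z in Set.Ioc x (x + c), G x z with hΦdef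
  have hΦm : Measurable Φ := by
    apply meas_ioc measurable_id (measurable_id.add_const c)
    exact hGm
  -- Step 1: rewrite the RHS as ∫⁻ x in Ioc 0 1, Φ x
  have hRHS : (∫⁻ v in Set.Icc (0 : ℝ) 1, ∫⁻ r in Set.Icc (0 : ℝ) 1,
        (∫⁻ y in Set.Icc (v + r * A') (v + r * (((j' : ℝ) + 1) / P)),
            f (v + r * A') y (v + r * (((j' : ℝ) + 1) / P))) *
          ENNReal.ofReal ((2 : ℝ) ^ (-(k : ℤ))))
      = ∫⁻ x in Set.Ioc (0:ℝ) 1, Φ x := by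
    have e0 : ∀ v r : ℝ, v + r * (((j':ℝ) + 1) / P) = (v + r * A') + r * c := by
      intro v r; rw [hb']; ring
    calc ∫⁻ v in Set.Icc (0 : ℝ) 1, ∫⁻ r in Set.Icc (0 : ℝ) 1,
        (∫⁻ y in Set.Icc (v + r * A') (v + r * (((j' : ℝ) + 1) / P)),
            f (v + r * A') y (v + r * (((j' : ℝ) + 1) / P))) *
          ENNReal.ofReal ((2 : ℝ) ^ (-(k : ℤ)))
        = ∫⁻ v in Set.Ioc (0:ℝ) 1, ∫⁻ r in Set.Ioc (0:ℝ) 1,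
            H (v + r * A') r * ENNReal.ofReal c := by
          rw [← Measure.restrict_congr_set Ioc_ae_eq_Icc]
          refine lintegral_congr fun v => ?_
          refine lintegral_congr fun r => ?_
          rw [hofReal, e0 v r]
      _ = ∫⁻ r in Set.Ioc (0:ℝ) 1, ∫⁻ v in Set.Ioc (0:ℝ) 1,
            H (v + r * A') r * ENNReal.ofReal c := by
          refine lintegral_lintegral_swap ?_
          exact ((hHm.comp ((measurable_fst.add (measurable_snd.mul_const A')).prodMk
            measurable_snd)).mul_const _).aemeasurable
      _ = ∫⁻ r in Set.Ioc (0:ℝ) 1, ∫⁻ v in Set.Ioc (0:ℝ) 1,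
            H v r * ENNReal.ofReal c := by
          refine setLIntegral_congr_fun_ae measurableSet_Ioc (ae_of_all _ fun r hr => ?_)
          rw [lintegral_mul_const' _ _ ENNReal.ofReal_ne_top,
            lintegral_mul_const' _ _ ENNReal.ofReal_ne_top]
          congr 1
          have hper : ∀ x, H (x + 1) r = H x r := by
            intro x
            show (∫⁻ y in Set.Icc (x+1) ((x+1) + r*c), f (x+1) y ((x+1) + r*c))
              = ∫⁻ y in Set.Icc x (x + r*c), f x y (x + r*c)
            rw [shift_lem (fun y => f (x+1) y ((x+1) + r*c)) 1 measurableSet_Icc]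
            have hpre : (fun y : ℝ => y + 1) ⁻¹' Set.Icc (x+1) ((x+1) + r*c)
                = Set.Icc x (x + r*c) := by
              ext y
              simp only [Set.mem_preimage, Set.mem_Icc]
              constructor <;> intro h <;> constructor <;> linarith [h.1, h.2]
            rw [hpre]
            refine lintegral_congr fun y => ?_
            rw [show (x+1) + r*c = (x + r*c) + 1 by ring, hper3, hper2, hper1]
          exact periodic_shift (fun x => H x r) hper (mul_nonneg hr.1.le hA'0)
            (by nlinarith [hr.1, hr.2, hA'0, hA'1, hc])
      _ = ∫⁻ v in Set.Ioc (0:ℝ) 1, ∫⁻ r in Set.Ioc (0:ℝ) 1,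
            H v r * ENNReal.ofReal c := by
          refine lintegral_lintegral_swap ?_
          exact ((hHm.comp (measurable_snd.prodMk measurable_fst)).mul_const _).aemeasurable
      _ = ∫⁻ x in Set.Ioc (0:ℝ) 1, Φ x := by
          refine setLIntegral_congr_fun_ae measurableSet_Ioc (ae_of_all _ fun x hx => ?_)
          rw [lintegral_mul_const' _ _ ENNReal.ofReal_ne_top, mul_comm]
          rw [show Φ x = ∫⁻ z in Set.Ioc x (x + c), G x z from rfl,
            scale_lem (G x) hc x]
          congr 1
          refine lintegral_congr fun r => ?_
          show H x r = G x (c * r + x)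
          rw [show c * r + x = x + r * c by ring]
  rw [hRHS]
  -- Step 2: split [0,1] into dyadic pieces and bound each term
  have hsplit : ∫⁻ x in Set.Ioc (0:ℝ) 1, Φ x
      = ∑ j ∈ Finset.range (2 ^ k),
          ∫⁻ x in Set.Ioc ((j:ℝ)/P) (((j:ℝ)+1)/P), Φ x := by
    have h1 : (((2:ℕ) ^ k : ℕ) : ℝ) / P = 1 := by
      rw [hPdef]
      push_cast
      rw [div_self (by positivity)]
    calc ∫⁻ x in Ioc (0:ℝ) 1, Φ x
        = ∫⁻ x in Ioc (0:ℝ) ((((2:ℕ) ^ k : ℕ) : ℝ) / P), Φ x := by rw [h1]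
      _ = ∑ j ∈ Finset.range (2 ^ k),
            ∫⁻ x in Ioc ((j:ℝ)/P) (((j:ℝ)+1)/P), Φ x := (split_lem Φ P hP (2 ^ k)).symm
  rw [hsplit]
  refine Finset.sum_le_sum fun j hj => ?_
  rw [← Measure.restrict_congr_set Ioc_ae_eq_Icc]
  refine setLIntegral_mono hΦm fun x hx => ?_
  obtain ⟨hx1, hx2⟩ := hx
  have hab : ((j:ℝ)+1)/P = (j:ℝ)/P + c := by rw [hcdef]; field_simp
  have hgx : Measurable fun p : ℝ × ℝ => f x p.1 p.2 :=
    hf.comp (measurable_const.prodMk (measurable_fst.prodMk measurable_snd))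
  calc ∫⁻ y in Set.Icc x (((j:ℝ)+1)/P), ∫⁻ z in Set.Icc y (((j:ℝ)+1)/P), f x y z
      = ∫⁻ z in Set.Icc x (((j:ℝ)+1)/P), ∫⁻ y in Set.Icc x z, f x y z :=
        triangle_lem (fun y z => f x y z) hgx x _
    _ = ∫⁻ z in Set.Ioc x (((j:ℝ)+1)/P), G x z := by
        rw [← Measure.restrict_congr_set Ioc_ae_eq_Icc]
    _ ≤ ∫⁻ z in Set.Ioc x (x + c), G x z :=
        lintegral_mono_set (Set.Ioc_subset_Ioc_right (by rw [hab]; linarith))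
    _ = Φ x := rfl
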